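/- Let M_1, N_1 be n-outcome POVMs on ℂ^d and M_2, N_2 be n'-outcome POVMs on ℂ^{d'}. Let M_1 ⊗ M_2 denote the nn'-outcome POVM on ℂ^{dd'} with effects (M_1)_i ⊗ (M_2)_j (Kronecker products), and similarly for N_1 ⊗ N_2. Then d_av^m(M_1 ⊗ M_2, N_1 ⊗ N_2) ≤ d_av^m(M_1, N_1) + d_av^m(M_2, N_2). -/

import Mathlib

open Matrix Kronecker ComplexOrder

/-- The Hilbert–Schmidt (Frobenius) norm of a complex matrix. -/
noncomputable def hsNorm {n : Type*} [Fintype n] (A : Matrix n n ℂ) : ℝ :=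
  Real.sqrt ((Matrix.trace (Aᴴ * A)).re)

/-- A POVM: a tuple of positive semidefinite effects summing to the identity. -/
def IsPOVM {n : Type*} [Fintype n] [DecidableEq n] {ι : Type*} [Fintype ι]
    (M : ι → Matrix n n ℂ) : Prop :=
  (∀ i, (M i).PosSemidef) ∧ ∑ i, M i = 1

/-- The average-case distance between POVMs on a `Fintype.card n`-dimensional space. -/
noncomputable def davM {n : Type*} [Fintype n] {ι : Type*} [Fintype ι]
    (M N : ι → Matrix n n ℂ) : ℝ :=
  (1 / (2 * (Fintype.card n : ℝ))) *
    ∑ i, Real.sqrt ((hsNorm (M i - N i)) ^ 2 + ((Matrix.trace (M i - N i)).re) ^ 2)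

lemma trace_conjT_mul {n : Type*} [Fintype n] (A : Matrix n n ℂ) :
    Matrix.trace (Aᴴ * A) = ((∑ i, ∑ j, Complex.normSq (A j i) : ℝ) : ℂ) := by
  simp only [Matrix.trace, Matrix.diag, Matrix.mul_apply, Matrix.conjTranspose_apply]
  push_cast
  congr 1; ext i; congr 1; ext j
  rw [Complex.normSq_eq_conj_mul_self]; rfl

lemma hsNorm_eq {n : Type*} [Fintype n] (A : Matrix n n ℂ) :
    hsNorm A = Real.sqrt (∑ i, ∑ j, Complex.normSq (A j i)) := by
  rw [hsNorm, trace_conjT_mul]; norm_num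

lemma hsNorm_nonneg {n : Type*} [Fintype n] (A : Matrix n n ℂ) : 0 ≤ hsNorm A :=
  Real.sqrt_nonneg _

lemma hsNorm_sq {n : Type*} [Fintype n] (A : Matrix n n ℂ) :
    hsNorm A ^ 2 = ∑ i, ∑ j, Complex.normSq (A j i) := by
  rw [hsNorm_eq, Real.sq_sqrt]
  exact Finset.sum_nonneg fun i _ => Finset.sum_nonneg fun j _ => Complex.normSq_nonneg _

noncomputable def matToEuc {n : Type*} [Fintype n] (A : Matrix n n ℂ) :
    EuclideanSpace ℂ (n × n) := WithLp.toLp 2 (fun p : n × n => A p.1 p.2)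

lemma hsNorm_eq_norm {n : Type*} [Fintype n] (A : Matrix n n ℂ) :
    hsNorm A = ‖matToEuc A‖ := by
  rw [hsNorm_eq, EuclideanSpace.norm_eq]
  congr 1
  rw [Fintype.sum_prod_type]
  rw [Finset.sum_comm]
  congr 1; ext i; congr 1; ext j
  rw [matToEuc]
  simp [Complex.sq_norm]

lemma hsNorm_add_le {n : Type*} [Fintype n] (A B : Matrix n n ℂ) :
    hsNorm (A + B) ≤ hsNorm A + hsNorm B := by
  simp only [hsNorm_eq_norm]
  have : matToEuc (A + B) = matToEuc A + matToEuc B := by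
    rfl
  rw [this]
  exact norm_add_le _ _

lemma hsNorm_kronecker {m n : Type*} [Fintype m] [Fintype n]
    (A : Matrix m m ℂ) (B : Matrix n n ℂ) :
    hsNorm (A ⊗ₖ B) = hsNorm A * hsNorm B := by
  rw [hsNorm_eq, hsNorm_eq, hsNorm_eq,
    ← Real.sqrt_mul (Finset.sum_nonneg fun i _ => Finset.sum_nonneg fun j _ =>
      Complex.normSq_nonneg _)]
  congr 1
  simp only [Fintype.sum_prod_type, Matrix.kronecker_apply, Complex.normSq_mul,
    ← Finset.mul_sum, ← Finset.sum_mul]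

lemma IsHermitian.trace_re {n : Type*} [Fintype n] {A : Matrix n n ℂ}
    (hA : A.IsHermitian) : Matrix.trace A = ((Matrix.trace A).re : ℂ) := by
  have h := Matrix.trace_conjTranspose A
  rw [hA] at h
  exact (Complex.conj_eq_iff_re.mp h.symm).symm

lemma PosSemidef.key {n : Type*} [Fintype n] [DecidableEq n] {A : Matrix n n ℂ}
    (hA : A.PosSemidef) :
    0 ≤ (Matrix.trace A).re ∧ hsNorm A ≤ (Matrix.trace A).re := by
  obtain ⟨C, rfl⟩ : ∃ C : Matrix n n ℂ, A = Cᴴ * C := by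
    open scoped MatrixOrder in
    obtain ⟨C, hC⟩ := CStarAlgebra.nonneg_iff_eq_star_mul_self.mp hA.nonneg
    exact ⟨C, hC⟩
  set v : n → EuclideanSpace ℂ n := fun i => WithLp.toLp 2 (fun k => C k i) with hv
  have hentry : ∀ i j, (Cᴴ * C) i j = inner ℂ (v i) (v j) := by
    intro i j
    simp [Matrix.mul_apply, Matrix.conjTranspose_apply, PiLp.inner_apply, hv,
      RCLike.inner_apply]
    exact Finset.sum_congr rfl fun _ _ => mul_comm _ _
  have htr : (Matrix.trace (Cᴴ * C)).re = ∑ i, ‖v i‖ ^ 2 := by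
    simp only [Matrix.trace, Matrix.diag, hentry, Complex.re_sum]
    refine Finset.sum_congr rfl fun i _ => ?_
    rw [inner_self_eq_norm_sq_to_K]
    norm_cast
  have htrnn : 0 ≤ (Matrix.trace (Cᴴ * C)).re := by
    rw [htr]; positivity
  refine ⟨htrnn, ?_⟩
  have hsq : hsNorm (Cᴴ * C) ^ 2 ≤ ((Matrix.trace (Cᴴ * C)).re) ^ 2 := by
    rw [hsNorm_sq, htr, sq, Finset.sum_mul_sum]
    refine Finset.sum_le_sum fun i _ => Finset.sum_le_sum fun j _ => ?_
    rw [hentry]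
    calc Complex.normSq (inner ℂ (v j) (v i)) = ‖(inner ℂ (v j) (v i))‖ ^ 2 := by
          rw [Complex.normSq_eq_norm_sq]
      _ ≤ (‖v j‖ * ‖v i‖) ^ 2 := by
          have := norm_inner_le_norm (𝕜 := ℂ) (v j) (v i)
          exact pow_le_pow_left₀ (norm_nonneg _) this 2
      _ = ‖v i‖ ^ 2 * ‖v j‖ ^ 2 := by ring
  calc hsNorm (Cᴴ * C) = Real.sqrt (hsNorm (Cᴴ * C) ^ 2) := by
        rw [Real.sqrt_sq (hsNorm_nonneg _)]
    _ ≤ Real.sqrt (((Matrix.trace (Cᴴ * C)).re) ^ 2) := Real.sqrt_le_sqrt hsq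
    _ = (Matrix.trace (Cᴴ * C)).re := Real.sqrt_sq htrnn

noncomputable def fdist {n : Type*} [Fintype n] (A : Matrix n n ℂ) : ℝ :=
  Real.sqrt (hsNorm A ^ 2 + (Matrix.trace A).re ^ 2)

lemma fdist_nonneg {n : Type*} [Fintype n] (A : Matrix n n ℂ) : 0 ≤ fdist A :=
  Real.sqrt_nonneg _

lemma sqrt_minkowski (a b c e : ℝ) :
    Real.sqrt ((a + c) ^ 2 + (b + e) ^ 2) ≤
      Real.sqrt (a ^ 2 + b ^ 2) + Real.sqrt (c ^ 2 + e ^ 2) := by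
  have h := norm_add_le (⟨a, b⟩ : ℂ) ⟨c, e⟩
  simpa [Complex.norm_def, Complex.normSq_apply, sq] using h

lemma fdist_add_le {n : Type*} [Fintype n] (A B : Matrix n n ℂ) :
    fdist (A + B) ≤ fdist A + fdist B := by
  unfold fdist
  calc Real.sqrt (hsNorm (A + B) ^ 2 + (Matrix.trace (A + B)).re ^ 2)
      ≤ Real.sqrt ((hsNorm A + hsNorm B) ^ 2 + ((Matrix.trace A).re + (Matrix.trace B).re) ^ 2) := by
        apply Real.sqrt_le_sqrt
        have h1 : hsNorm (A + B) ^ 2 ≤ (hsNorm A + hsNorm B) ^ 2 :=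
          pow_le_pow_left₀ (hsNorm_nonneg _) (hsNorm_add_le A B) 2
        have h2 : (Matrix.trace (A + B)).re = (Matrix.trace A).re + (Matrix.trace B).re := by
          rw [Matrix.trace_add, Complex.add_re]
        rw [h2]
        linarith
    _ ≤ _ := sqrt_minkowski _ _ _ _

lemma fdist_kron_right {m n : Type*} [Fintype m] [Fintype n] [DecidableEq n]
    {A : Matrix m m ℂ} {B : Matrix n n ℂ} (hA : A.IsHermitian) (hB : B.PosSemidef) :
    fdist (A ⊗ₖ B) ≤ (Matrix.trace B).re * fdist A := by
  obtain ⟨hb0, hble⟩ := PosSemidef.key hB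
  unfold fdist
  rw [hsNorm_kronecker, Matrix.trace_kronecker]
  have htr : ((Matrix.trace A * Matrix.trace B).re) = (Matrix.trace A).re * (Matrix.trace B).re := by
    rw [IsHermitian.trace_re hA, IsHermitian.trace_re hB.1]
    norm_cast
  rw [htr]
  have key : (hsNorm A * hsNorm B) ^ 2 + ((Matrix.trace A).re * (Matrix.trace B).re) ^ 2
      ≤ ((Matrix.trace B).re) ^ 2 * (hsNorm A ^ 2 + (Matrix.trace A).re ^ 2) := by
    have h1 : hsNorm B ^ 2 ≤ ((Matrix.trace B).re) ^ 2 :=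
      pow_le_pow_left₀ (hsNorm_nonneg _) hble 2
    have h2 : 0 ≤ hsNorm A ^ 2 := sq_nonneg _
    nlinarith [sq_nonneg (hsNorm A)]
  calc Real.sqrt ((hsNorm A * hsNorm B) ^ 2 + ((Matrix.trace A).re * (Matrix.trace B).re) ^ 2)
      ≤ Real.sqrt (((Matrix.trace B).re) ^ 2 * (hsNorm A ^ 2 + (Matrix.trace A).re ^ 2)) :=
        Real.sqrt_le_sqrt key
    _ = (Matrix.trace B).re * Real.sqrt (hsNorm A ^ 2 + (Matrix.trace A).re ^ 2) := by
        rw [Real.sqrt_mul (sq_nonneg _), Real.sqrt_sq hb0]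

lemma fdist_kron_left {m n : Type*} [Fintype m] [Fintype n] [DecidableEq m]
    {A : Matrix m m ℂ} {B : Matrix n n ℂ} (hA : A.PosSemidef) (hB : B.IsHermitian) :
    fdist (A ⊗ₖ B) ≤ (Matrix.trace A).re * fdist B := by
  obtain ⟨ha0, hale⟩ := PosSemidef.key hA
  unfold fdist
  rw [hsNorm_kronecker, Matrix.trace_kronecker]
  have htr : ((Matrix.trace A * Matrix.trace B).re) = (Matrix.trace A).re * (Matrix.trace B).re := by
    rw [IsHermitian.trace_re hA.1, IsHermitian.trace_re hB]
    norm_cast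
  rw [htr]
  have key : (hsNorm A * hsNorm B) ^ 2 + ((Matrix.trace A).re * (Matrix.trace B).re) ^ 2
      ≤ ((Matrix.trace A).re) ^ 2 * (hsNorm B ^ 2 + (Matrix.trace B).re ^ 2) := by
    have h1 : hsNorm A ^ 2 ≤ ((Matrix.trace A).re) ^ 2 :=
      pow_le_pow_left₀ (hsNorm_nonneg _) hale 2
    nlinarith [sq_nonneg (hsNorm B)]
  calc Real.sqrt ((hsNorm A * hsNorm B) ^ 2 + ((Matrix.trace A).re * (Matrix.trace B).re) ^ 2)
      ≤ Real.sqrt (((Matrix.trace A).re) ^ 2 * (hsNorm B ^ 2 + (Matrix.trace B).re ^ 2)) :=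
        Real.sqrt_le_sqrt key
    _ = (Matrix.trace A).re * Real.sqrt (hsNorm B ^ 2 + (Matrix.trace B).re ^ 2) := by
        rw [Real.sqrt_mul (sq_nonneg _), Real.sqrt_sq ha0]


lemma kron_sub_decomp {m n : Type*} (A C : Matrix m m ℂ) (B D : Matrix n n ℂ) :
    A ⊗ₖ B - C ⊗ₖ D = (A - C) ⊗ₖ B + C ⊗ₖ (B - D) := by
  ext p q
  simp only [Matrix.kroneckerMap_apply, Matrix.sub_apply, Matrix.add_apply]
  ring

lemma davM_eq {n : Type*} [Fintype n] {ι : Type*} [Fintype ι] (M N : ι → Matrix n n ℂ) :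
    davM M N = (1 / (2 * (Fintype.card n : ℝ))) * ∑ i, fdist (M i - N i) := rfl

lemma davM_nonneg {n : Type*} [Fintype n] {ι : Type*} [Fintype ι]
    (M N : ι → Matrix n n ℂ) : 0 ≤ davM M N := by
  rw [davM_eq]
  have h1 : (0:ℝ) ≤ 1 / (2 * (Fintype.card n : ℝ)) := by positivity
  exact mul_nonneg h1 (Finset.sum_nonneg fun i _ => fdist_nonneg _)

theorem statement9 (d d' n n' : ℕ)
    (M₁ N₁ : Fin n → Matrix (Fin d) (Fin d) ℂ)
    (M₂ N₂ : Fin n' → Matrix (Fin d') (Fin d') ℂ)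
    (hM₁ : IsPOVM M₁) (hN₁ : IsPOVM N₁) (hM₂ : IsPOVM M₂) (hN₂ : IsPOVM N₂) :
    davM (fun p : Fin n × Fin n' => M₁ p.1 ⊗ₖ M₂ p.2)
        (fun p : Fin n × Fin n' => N₁ p.1 ⊗ₖ N₂ p.2) ≤
      davM M₁ N₁ + davM M₂ N₂ := by
  rcases Nat.eq_zero_or_pos d with hd | hd
  · subst hd
    have : davM (fun p : Fin n × Fin n' => M₁ p.1 ⊗ₖ M₂ p.2)
        (fun p : Fin n × Fin n' => N₁ p.1 ⊗ₖ N₂ p.2) = 0 := by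
      rw [davM_eq]
      simp
    rw [this]
    exact add_nonneg (davM_nonneg _ _) (davM_nonneg _ _)
  rcases Nat.eq_zero_or_pos d' with hd' | hd'
  · subst hd'
    have : davM (fun p : Fin n × Fin n' => M₁ p.1 ⊗ₖ M₂ p.2)
        (fun p : Fin n × Fin n' => N₁ p.1 ⊗ₖ N₂ p.2) = 0 := by
      rw [davM_eq]
      simp
    rw [this]
    exact add_nonneg (davM_nonneg _ _) (davM_nonneg _ _)
  -- main case
  have hb : ∑ j, (Matrix.trace (M₂ j)).re = (d' : ℝ) := by
    have h1 : ∑ j, Matrix.trace (M₂ j) = ((d' : ℝ) : ℂ) := by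
      rw [← Matrix.trace_sum, hM₂.2, Matrix.trace_one]
      simp
    calc ∑ j, (Matrix.trace (M₂ j)).re = (∑ j, Matrix.trace (M₂ j)).re :=
          (Complex.re_sum _ _).symm
      _ = (d' : ℝ) := by rw [h1, Complex.ofReal_re]
  have ha : ∑ i, (Matrix.trace (N₁ i)).re = (d : ℝ) := by
    have h1 : ∑ i, Matrix.trace (N₁ i) = ((d : ℝ) : ℂ) := by
      rw [← Matrix.trace_sum, hN₁.2, Matrix.trace_one]
      simp
    calc ∑ i, (Matrix.trace (N₁ i)).re = (∑ i, Matrix.trace (N₁ i)).re :=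
          (Complex.re_sum _ _).symm
      _ = (d : ℝ) := by rw [h1, Complex.ofReal_re]
  set S₁ := ∑ i, fdist (M₁ i - N₁ i) with hS₁
  set S₂ := ∑ j, fdist (M₂ j - N₂ j) with hS₂
  have hkey : ∑ p : Fin n × Fin n', fdist (M₁ p.1 ⊗ₖ M₂ p.2 - N₁ p.1 ⊗ₖ N₂ p.2)
      ≤ (d' : ℝ) * S₁ + (d : ℝ) * S₂ := by
    have hterm : ∀ p : Fin n × Fin n',
        fdist (M₁ p.1 ⊗ₖ M₂ p.2 - N₁ p.1 ⊗ₖ N₂ p.2)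
          ≤ (Matrix.trace (M₂ p.2)).re * fdist (M₁ p.1 - N₁ p.1)
            + (Matrix.trace (N₁ p.1)).re * fdist (M₂ p.2 - N₂ p.2) := by
      intro p
      rw [kron_sub_decomp]
      calc fdist ((M₁ p.1 - N₁ p.1) ⊗ₖ M₂ p.2 + N₁ p.1 ⊗ₖ (M₂ p.2 - N₂ p.2))
          ≤ fdist ((M₁ p.1 - N₁ p.1) ⊗ₖ M₂ p.2) + fdist (N₁ p.1 ⊗ₖ (M₂ p.2 - N₂ p.2)) :=
            fdist_add_le _ _
        _ ≤ _ := by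
            gcongr
            · exact fdist_kron_right ((hM₁.1 p.1).1.sub (hN₁.1 p.1).1) (hM₂.1 p.2)
            · exact fdist_kron_left (hN₁.1 p.1) ((hM₂.1 p.2).1.sub (hN₂.1 p.2).1)
    calc ∑ p : Fin n × Fin n', fdist (M₁ p.1 ⊗ₖ M₂ p.2 - N₁ p.1 ⊗ₖ N₂ p.2)
        ≤ ∑ p : Fin n × Fin n', ((Matrix.trace (M₂ p.2)).re * fdist (M₁ p.1 - N₁ p.1)
            + (Matrix.trace (N₁ p.1)).re * fdist (M₂ p.2 - N₂ p.2)) :=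
          Finset.sum_le_sum fun p _ => hterm p
      _ = (∑ j, (Matrix.trace (M₂ j)).re) * S₁ + (∑ i, (Matrix.trace (N₁ i)).re) * S₂ := by
          rw [hS₁, hS₂]
          rw [Fintype.sum_prod_type]
          simp only [Finset.sum_add_distrib, ← Finset.sum_mul, ← Finset.mul_sum]
      _ = (d' : ℝ) * S₁ + (d : ℝ) * S₂ := by rw [ha, hb]
  rw [davM_eq, davM_eq, davM_eq]
  have hcard : (Fintype.card (Fin d × Fin d') : ℝ) = (d : ℝ) * (d' : ℝ) := by
    simp [Fintype.card_prod]
  rw [hcard]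
  simp only [Fintype.card_fin]
  have hd0 : (0:ℝ) < (d : ℝ) := by exact_mod_cast hd
  have hd'0 : (0:ℝ) < (d' : ℝ) := by exact_mod_cast hd'
  calc (1 / (2 * ((d:ℝ) * (d':ℝ)))) * ∑ p : Fin n × Fin n',
        fdist (M₁ p.1 ⊗ₖ M₂ p.2 - N₁ p.1 ⊗ₖ N₂ p.2)
      ≤ (1 / (2 * ((d:ℝ) * (d':ℝ)))) * ((d' : ℝ) * S₁ + (d : ℝ) * S₂) := by
        apply mul_le_mul_of_nonneg_left hkey
        positivity
    _ = (1 / (2 * (d:ℝ))) * S₁ + (1 / (2 * (d':ℝ))) * S₂ := by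
        field_simp
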